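/- Suppose a : ℕ → ℝ satisfies a(tn²) ≤ C|a(t)|·n^ε for all square-free t and all n (with C depending only on ε), and Σ_n |a(n)|/n^{1+ε'} < ∞ for every ε' > 0. Then for every r ≥ 1 and every real τ, |Σ_{m ≡ 0 mod r²} a(m)/m^{1+ε+iτ}| ≤ C'/r² with C' depending only on the sequence and ε, not on r or τ. -/

import Mathlib

open Complex

/-- Lemma 2 of the paper (`oneoverrsq`): under the coefficient bound
`|a(tn²)| ≤ C|a(t)|n^ε` for square-free `t`, and absolute convergence of
`∑ |a(n)|/n^{1+ε'}` for every `ε' > 0`, the restricted Dirichlet series satisfies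
`|D_r(1+ε+iτ)| ≤ C'/r²` uniformly in `r` and `τ`. -/
theorem restricted_series_decay (a : ℕ → ℝ) (ε : ℝ) (hε : 0 < ε) (C : ℝ)
    (h1 : ∀ t n : ℕ, Squarefree t → 0 < n → |a (t * n ^ 2)| ≤ C * |a t| * (n : ℝ) ^ ε)
    (h2 : ∀ ε' : ℝ, 0 < ε' → Summable fun n : ℕ+ => |a n| / (n : ℝ) ^ (1 + ε')) :
    ∃ C' : ℝ, ∀ r : ℕ, 0 < r → ∀ τ : ℝ,
      ‖∑' m : ℕ+, (if r ^ 2 ∣ (m : ℕ) then (a m : ℂ) / (m : ℂ) ^ (1 + ε + τ * I : ℂ)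
        else 0)‖ ≤ C' / (r : ℝ) ^ 2 := by
  classical
  -- decomposition of each positive natural as (squarefree) * (square)
  have decomp : ∀ n : ℕ+, ∃ p : ℕ+ × ℕ+,
      Squarefree ((p.1 : ℕ)) ∧ (p.1 : ℕ) * (p.2 : ℕ) ^ 2 = (n : ℕ) := by
    intro n
    obtain ⟨t, k, ht, hk, hmul, hsf⟩ := Nat.sq_mul_squarefree_of_pos n.pos
    exact ⟨(⟨t, ht⟩, ⟨k, hk⟩), hsf, by rw [mul_comm]; exact hmul⟩
  choose j hjsf hjmul using decomp
  have j_inj : Function.Injective j := by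
    intro n₁ n₂ h
    apply PNat.coe_injective
    rw [← hjmul n₁, ← hjmul n₂, h]
  -- summability facts
  have hS : Summable fun t : ℕ+ => |a t| / (t : ℝ) ^ (1 + ε) := h2 ε hε
  have hT : Summable fun k : ℕ+ => (k : ℝ) ^ (-(2 + ε)) := by
    have : Summable fun n : ℕ => (n : ℝ) ^ (-(2 + ε)) :=
      Real.summable_nat_rpow.mpr (by linarith)
    exact this.comp_injective (fun x y h => PNat.coe_injective h)
  have hH : Summable fun p : ℕ+ × ℕ+ =>
      (|a p.1| / (p.1 : ℝ) ^ (1 + ε)) * (p.2 : ℝ) ^ (-(2 + ε)) := by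
    apply summable_mul_of_summable_norm (f := fun t : ℕ+ => |a t| / (t : ℝ) ^ (1 + ε))
      (g := fun k : ℕ+ => (k : ℝ) ^ (-(2 + ε)))
    · refine hS.congr fun t => ?_
      rw [Real.norm_of_nonneg (div_nonneg (abs_nonneg _) (Real.rpow_nonneg (Nat.cast_nonneg _) _))]
    · refine hT.congr fun k => ?_
      rw [Real.norm_of_nonneg (Real.rpow_nonneg (Nat.cast_nonneg _) _)]
  set P : ℝ := ∑' p : ℕ+ × ℕ+, (|a p.1| / (p.1 : ℝ) ^ (1 + ε)) * (p.2 : ℝ) ^ (-(2 + ε)) with hP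
  refine ⟨|C| * P, ?_⟩
  intro r hr τ
  have hr1 : (1 : ℝ) ≤ (r : ℝ) := by exact_mod_cast hr
  have hrpos : (0 : ℝ) < (r : ℝ) := by positivity
  set s : ℂ := (1 + ε + τ * I : ℂ) with hs
  have hsre : s.re = 1 + ε := by simp [hs]
  set f : ℕ+ → ℂ := fun m =>
    if r ^ 2 ∣ (m : ℕ) then (a m : ℂ) / (m : ℂ) ^ s else 0 with hf
  -- norm of each term
  have hnorm : ∀ m : ℕ+,
      ‖f m‖ = if r ^ 2 ∣ (m : ℕ) then |a m| / (m : ℝ) ^ (1 + ε) else 0 := by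
    intro m
    by_cases hdvd : r ^ 2 ∣ (m : ℕ)
    · rw [hf]
      simp only [hdvd, if_true]
      rw [norm_div, Complex.norm_real, Real.norm_eq_abs]
      have : ((m : ℕ+) : ℂ) = ((m : ℕ) : ℂ) := by norm_cast
      rw [this, Complex.norm_natCast_cpow_of_pos m.pos, hsre]
    · rw [hf]; simp [hdvd]
  have hN : Summable fun m : ℕ+ => ‖f m‖ := by
    refine Summable.of_nonneg_of_le (fun m => norm_nonneg _) (fun m => ?_) hS
    rw [hnorm m]
    split
    · exact le_refl _
    · positivity
  -- reindex: sum over multiples of r^2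
  set R : ℕ+ := ⟨r, hr⟩ with hR
  set i : ℕ+ → ℕ+ := fun n => R ^ 2 * n with hi
  have hicoe : ∀ n : ℕ+, ((i n : ℕ+) : ℕ) = r ^ 2 * (n : ℕ) := by
    intro n; simp [hi, hR, PNat.pow_coe]; exact PNat.pow_coe R 2
  have i_inj : Function.Injective i := fun n₁ n₂ h => by
    simpa [hi] using h
  have hsupp : Function.support (fun m : ℕ+ => ‖f m‖) ⊆ Set.range i := by
    intro m hm
    have hdvd : r ^ 2 ∣ (m : ℕ) := by
      by_contra hc
      apply hm
      show ‖f m‖ = 0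
      rw [hnorm m, if_neg hc]
    obtain ⟨d, hd⟩ := hdvd
    have hdpos : 0 < d := by
      rcases Nat.eq_zero_or_pos d with h0 | h0
      · subst h0; rw [mul_zero] at hd; exact absurd hd m.pos.ne'
      · exact h0
    refine ⟨⟨d, hdpos⟩, ?_⟩
    apply PNat.coe_injective
    refine (hicoe ⟨d, hdpos⟩).trans ?_
    exact hd.symm
  have hreindex : ∑' n : ℕ+, ‖f (i n)‖ = ∑' m : ℕ+, ‖f m‖ :=
    i_inj.tsum_eq hsupp
  -- the comparison sums
  set g : ℕ+ × ℕ+ → ℝ := fun p =>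
    |C| * |a p.1| * ((r * (p.2 : ℕ) : ℕ) : ℝ) ^ ε /
      (((p.1 : ℕ) * (r * (p.2 : ℕ)) ^ 2 : ℕ) : ℝ) ^ (1 + ε) with hg
  set G : ℕ+ × ℕ+ → ℝ := fun p =>
    |C| * ((|a p.1| / (p.1 : ℝ) ^ (1 + ε)) * (p.2 : ℝ) ^ (-(2 + ε))) / (r : ℝ) ^ 2 with hG
  have g_nonneg : ∀ p, 0 ≤ g p := by
    intro p; rw [hg]; positivity
  have gleG : ∀ p, g p ≤ G p := by
    intro p
    rw [hg, hG]
    obtain ⟨t, k⟩ := p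
    simp only
    have ht1 : (1 : ℝ) ≤ (t : ℝ) := by exact_mod_cast t.one_le
    have hk1 : (1 : ℝ) ≤ ((k : ℕ+) : ℝ) := by exact_mod_cast k.one_le
    have htpos : (0 : ℝ) < (t : ℝ) := by linarith
    have hkpos : (0 : ℝ) < ((k : ℕ+) : ℝ) := by linarith
    have hx : (0 : ℝ) < (r : ℝ) * (k : ℕ+) := by positivity
    push_cast
    set x : ℝ := (r : ℝ) * ((k : ℕ+) : ℝ) with hxdef
    -- rewrite denominator
    have hden : ((t : ℝ) * x ^ 2) ^ (1 + ε) = (t : ℝ) ^ (1 + ε) * x ^ (2 * (1 + ε)) := by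
      rw [Real.mul_rpow htpos.le (by positivity), ← Real.rpow_natCast x 2,
        ← Real.rpow_mul hx.le]
      norm_num
    rw [hden]
    have hxpow : x ^ ε / x ^ (2 * (1 + ε)) = x ^ (-(2 + ε)) := by
      rw [← Real.rpow_sub hx]
      ring_nf
    have key : |C| * |a t| * x ^ ε / ((t : ℝ) ^ (1 + ε) * x ^ (2 * (1 + ε)))
        = |C| * ((|a t| / (t : ℝ) ^ (1 + ε)) * x ^ (-(2 + ε))) := by
      rw [← hxpow]
      field_simp
    rw [key]
    have hxsplit : x ^ (-(2 + ε)) = (r : ℝ) ^ (-(2 + ε)) * ((k : ℕ+) : ℝ) ^ (-(2 + ε)) := by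
      rw [hxdef, Real.mul_rpow hrpos.le hkpos.le]
    have hrbound : (r : ℝ) ^ (-(2 + ε)) ≤ ((r : ℝ) ^ 2)⁻¹ := by
      have : (r : ℝ) ^ (-(2 + ε)) ≤ (r : ℝ) ^ (-2 : ℝ) :=
        Real.rpow_le_rpow_of_exponent_le hr1 (by linarith)
      calc (r : ℝ) ^ (-(2 + ε)) ≤ (r : ℝ) ^ (-2 : ℝ) := this
        _ = ((r : ℝ) ^ 2)⁻¹ := by
          rw [Real.rpow_neg hrpos.le, ← Real.rpow_natCast (r : ℝ) 2]
          norm_num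
    rw [hxsplit]
    rw [div_eq_mul_inv (|C| * _) ((r:ℝ)^2)]
    have h0 : 0 ≤ |C| * (|a t| / (t : ℝ) ^ (1 + ε)) := by positivity
    have h0' : 0 ≤ ((k : ℕ+) : ℝ) ^ (-(2 + ε)) := by positivity
    calc |C| * (|a t| / (t : ℝ) ^ (1 + ε) * ((r : ℝ) ^ (-(2 + ε)) * ((k : ℕ+) : ℝ) ^ (-(2 + ε))))
        = (|C| * (|a t| / (t : ℝ) ^ (1 + ε)) * ((k : ℕ+) : ℝ) ^ (-(2 + ε))) * (r : ℝ) ^ (-(2 + ε)) := by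
          ring
      _ ≤ (|C| * (|a t| / (t : ℝ) ^ (1 + ε)) * ((k : ℕ+) : ℝ) ^ (-(2 + ε))) * ((r : ℝ) ^ 2)⁻¹ := by
          apply mul_le_mul_of_nonneg_left hrbound
          positivity
      _ = |C| * (|a t| / (t : ℝ) ^ (1 + ε) * ((k : ℕ+) : ℝ) ^ (-(2 + ε))) * ((r : ℝ) ^ 2)⁻¹ := by
          ring
  have hGsum : Summable G := by
    rw [hG]
    exact ((hH.mul_left |C|).div_const _)
  have hgsum : Summable g := Summable.of_nonneg_of_le g_nonneg gleG hGsum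
  -- termwise bound after reindexing
  have hterm : ∀ n : ℕ+, ‖f (i n)‖ ≤ g (j n) := by
    intro n
    have hdvd : r ^ 2 ∣ ((i n : ℕ+) : ℕ) := by
      rw [hicoe]; exact Dvd.intro _ rfl
    rw [hnorm, if_pos hdvd, hg]
    set t := (j n).1 with htdef
    set k := (j n).2 with hkdef
    have hmul : (t : ℕ) * (k : ℕ) ^ 2 = (n : ℕ) := hjmul n
    have hin : ((i n : ℕ+) : ℕ) = (t : ℕ) * (r * (k : ℕ)) ^ 2 := by
      rw [hicoe, ← hmul]; ring
    have hrk : 0 < r * (k : ℕ) := by positivity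
    have hnum : |a ((i n : ℕ+) : ℕ)| ≤ |C| * |a (t : ℕ)| * ((r * (k : ℕ) : ℕ) : ℝ) ^ ε := by
      rw [hin]
      calc |a ((t : ℕ) * (r * (k : ℕ)) ^ 2)|
          ≤ C * |a (t : ℕ)| * ((r * (k : ℕ) : ℕ) : ℝ) ^ ε := h1 _ _ (hjsf n) hrk
        _ ≤ |C| * |a (t : ℕ)| * ((r * (k : ℕ) : ℕ) : ℝ) ^ ε := by
            apply mul_le_mul_of_nonneg_right _ (Real.rpow_nonneg (Nat.cast_nonneg _) _)
            exact mul_le_mul_of_nonneg_right (le_abs_self C) (abs_nonneg _)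
    have hdenpos : (0 : ℝ) < ((((t : ℕ) * (r * (k : ℕ)) ^ 2) : ℕ) : ℝ) ^ (1 + ε) := by
      have : 0 < (t : ℕ) * (r * (k : ℕ)) ^ 2 := by positivity
      have : (0 : ℝ) < (((t : ℕ) * (r * (k : ℕ)) ^ 2 : ℕ) : ℝ) := by exact_mod_cast this
      positivity
    have hcoe : (((i n : ℕ+) : ℕ) : ℝ) = ((((t : ℕ) * (r * (k : ℕ)) ^ 2) : ℕ) : ℝ) := by
      exact_mod_cast congrArg (Nat.cast : ℕ → ℝ) hin
    rw [hcoe]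
    exact (div_le_div_iff_of_pos_right hdenpos).mpr hnum
  -- chain of inequalities
  have step1 : ‖∑' m : ℕ+, f m‖ ≤ ∑' m : ℕ+, ‖f m‖ := norm_tsum_le_tsum_norm hN
  have hFsum : Summable fun n : ℕ+ => ‖f (i n)‖ := hN.comp_injective i_inj
  have step2 : ∑' n : ℕ+, ‖f (i n)‖ ≤ ∑' p, g p :=
    Summable.tsum_le_tsum_of_inj j j_inj (fun c _ => g_nonneg c) hterm hFsum hgsum
  have step3 : ∑' p, g p ≤ ∑' p, G p := Summable.tsum_le_tsum gleG hgsum hGsum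
  have step4 : ∑' p, G p = |C| * P / (r : ℝ) ^ 2 := by
    rw [hG, hP]
    rw [tsum_div_const, tsum_mul_left]
  calc ‖∑' m : ℕ+, f m‖ ≤ ∑' m : ℕ+, ‖f m‖ := step1
    _ = ∑' n : ℕ+, ‖f (i n)‖ := hreindex.symm
    _ ≤ ∑' p, g p := step2
    _ ≤ ∑' p, G p := step3
    _ = |C| * P / (r : ℝ) ^ 2 := step4
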